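/- (First Pokhozhaev identity.) Let p > 1 and let Q : ℝ² → ℝ be a Schwartz-class function solving ΔQ − Q + |Q|^{p−1} Q = 0 on ℝ², where Δ = ∂_x² + ∂_y². Then ∫_{ℝ²} |∇Q|² dx dy = ((p−1)/2) ∫_{ℝ²} Q² dx dy. -/

import Mathlib

open MeasureTheory Real

noncomputable def pdx (f : ℝ × ℝ → ℝ) (z : ℝ × ℝ) : ℝ := fderiv ℝ f z (1, 0)
noncomputable def pdy (f : ℝ × ℝ → ℝ) (z : ℝ × ℝ) : ℝ := fderiv ℝ f z (0, 1)
noncomputable def lap (f : ℝ × ℝ → ℝ) (z : ℝ × ℝ) : ℝ := pdx (pdx f) z + pdy (pdy f) z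
noncomputable def ip (f g : ℝ × ℝ → ℝ) : ℝ := ∫ z : ℝ × ℝ, f z * g z
def IsSchwartz (f : ℝ × ℝ → ℝ) : Prop := ∃ g : SchwartzMap (ℝ × ℝ) ℝ, ∀ z, g z = f z

noncomputable def linL (p : ℝ) (Q f : ℝ × ℝ → ℝ) (z : ℝ × ℝ) : ℝ :=
  -lap f z + f z - p * Q z ^ (p - 1) * f z

noncomputable def lamQ (p : ℝ) (Q : ℝ × ℝ → ℝ) (z : ℝ × ℝ) : ℝ :=
  2 / (p - 1) * Q z + z.1 * pdx Q z + z.2 * pdy Q z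

structure IsGroundState (p : ℝ) (Q : ℝ × ℝ → ℝ) : Prop where
  schwartz : IsSchwartz Q
  pos : ∀ z, 0 < Q z
  radial : ∀ z w : ℝ × ℝ, ‖z‖ = ‖w‖ → Q z = Q w
  radDecr : ∀ z w : ℝ × ℝ, ‖z‖ ≤ ‖w‖ → Q w ≤ Q z
  solves : ∀ z, lap Q z - Q z + Q z ^ p = 0

/-- first Pokhozhaev identity for Schwartz solutions of
ΔQ - Q + |Q|^{p-1} Q = 0 on ℝ². -/

noncomputable def Dx (f : SchwartzMap (ℝ × ℝ) ℝ) : SchwartzMap (ℝ × ℝ) ℝ :=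
  LineDeriv.lineDerivOpCLM ℝ (SchwartzMap (ℝ × ℝ) ℝ) ((1:ℝ), (0:ℝ)) f
noncomputable def Dy (f : SchwartzMap (ℝ × ℝ) ℝ) : SchwartzMap (ℝ × ℝ) ℝ :=
  LineDeriv.lineDerivOpCLM ℝ (SchwartzMap (ℝ × ℝ) ℝ) ((0:ℝ), (1:ℝ)) f

lemma pdx_eq (f : SchwartzMap (ℝ × ℝ) ℝ) : pdx (⇑f) = ⇑(Dx f) := by
  funext z; simp [pdx, Dx, LineDeriv.lineDerivOpCLM_apply, SchwartzMap.lineDerivOp_apply_eq_fderiv]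

lemma pdy_eq (f : SchwartzMap (ℝ × ℝ) ℝ) : pdy (⇑f) = ⇑(Dy f) := by
  funext z; simp [pdy, Dy, LineDeriv.lineDerivOpCLM_apply, SchwartzMap.lineDerivOp_apply_eq_fderiv]

lemma sliceX (f : SchwartzMap (ℝ × ℝ) ℝ) (x y : ℝ) :
    HasDerivAt (fun t => f (t, y)) (Dx f (x, y)) x := by
  have h1 : HasDerivAt (fun t : ℝ => ((t, y) : ℝ × ℝ)) ((1:ℝ), (0:ℝ)) x :=
    (hasDerivAt_id x).prodMk (hasDerivAt_const x y)
  have h2 := (f.differentiableAt).hasFDerivAt.comp_hasDerivAt x h1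
  simpa [Dx, LineDeriv.lineDerivOpCLM_apply, SchwartzMap.lineDerivOp_apply_eq_fderiv, Function.comp_def] using h2

lemma sliceY (f : SchwartzMap (ℝ × ℝ) ℝ) (x y : ℝ) :
    HasDerivAt (fun t => f (x, t)) (Dy f (x, y)) y := by
  have h1 : HasDerivAt (fun t : ℝ => ((x, t) : ℝ × ℝ)) ((0:ℝ), (1:ℝ)) y :=
    (hasDerivAt_const y x).prodMk (hasDerivAt_id y)
  have h2 := (f.differentiableAt).hasFDerivAt.comp_hasDerivAt y h1
  simpa [Dy, LineDeriv.lineDerivOpCLM_apply, SchwartzMap.lineDerivOp_apply_eq_fderiv, Function.comp_def] using h2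

lemma mixed (g : SchwartzMap (ℝ × ℝ) ℝ) (z : ℝ × ℝ) : Dy (Dx g) z = Dx (Dy g) z := by
  have hsmooth := g.smooth ⊤
  have hd1 : Differentiable ℝ (fderiv ℝ (⇑g)) :=
    (ContDiff.fderiv_right hsmooth (m := 1) (by norm_cast)).differentiable one_ne_zero
  have hsym : ∀ v w : ℝ × ℝ,
      fderiv ℝ (fderiv ℝ (⇑g)) z v w = fderiv ℝ (fderiv ℝ (⇑g)) z w v :=
    second_derivative_symmetric (fun y => (g.differentiable y).hasFDerivAt)
      (hd1 z).hasFDerivAt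
  have key : ∀ m m' : ℝ × ℝ,
      fderiv ℝ (fun w => fderiv ℝ (⇑g) w m) z m' = fderiv ℝ (fderiv ℝ (⇑g)) z m' m := by
    intro m m'
    have := fderiv_clm_apply (𝕜 := ℝ) (c := fderiv ℝ (⇑g)) (u := fun _ => m)
      (hd1 z) (differentiableAt_const m)
    simp only [this]
    simp
  have e1 : ⇑(Dx g) = fun w => fderiv ℝ (⇑g) w ((1:ℝ), (0:ℝ)) := by
    funext w; simp [Dx, LineDeriv.lineDerivOpCLM_apply, SchwartzMap.lineDerivOp_apply_eq_fderiv]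
  have e2 : ⇑(Dy g) = fun w => fderiv ℝ (⇑g) w ((0:ℝ), (1:ℝ)) := by
    funext w; simp [Dy, LineDeriv.lineDerivOpCLM_apply, SchwartzMap.lineDerivOp_apply_eq_fderiv]
  calc Dy (Dx g) z = fderiv ℝ (⇑(Dx g)) z ((0:ℝ),(1:ℝ)) := by
        simp [Dy, LineDeriv.lineDerivOpCLM_apply, SchwartzMap.lineDerivOp_apply_eq_fderiv]
    _ = fderiv ℝ (fderiv ℝ (⇑g)) z ((0:ℝ),(1:ℝ)) ((1:ℝ),(0:ℝ)) := by rw [e1, key]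
    _ = fderiv ℝ (fderiv ℝ (⇑g)) z ((1:ℝ),(0:ℝ)) ((0:ℝ),(1:ℝ)) := hsym _ _
    _ = fderiv ℝ (⇑(Dy g)) z ((1:ℝ),(0:ℝ)) := by rw [e2, key]
    _ = Dx (Dy g) z := by simp [Dx, LineDeriv.lineDerivOpCLM_apply, SchwartzMap.lineDerivOp_apply_eq_fderiv]

lemma ibpX (h H : ℝ × ℝ → ℝ)
    (hd : ∀ x y : ℝ, HasDerivAt (fun t => h (t, y)) (H (x, y)) x)
    (hh : Integrable h) (hH : Integrable H) : ∫ z : ℝ × ℝ, H z = 0 := by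
  have hvol : (volume : Measure (ℝ × ℝ)) = (volume : Measure ℝ).prod volume :=
    MeasureTheory.Measure.volume_eq_prod _ _
  rw [hvol] at hh hH ⊢
  rw [integral_prod_symm _ hH]
  have hz : ∀ᵐ y : ℝ, (∫ x : ℝ, H (x, y)) = 0 := by
    filter_upwards [hh.prod_left_ae, hH.prod_left_ae] with y h1 h2
    exact integral_eq_zero_of_hasDerivAt_of_integrable (fun x => hd x y) h2 h1
  rw [integral_congr_ae hz, integral_zero]

lemma ibpY (h H : ℝ × ℝ → ℝ)
    (hd : ∀ x y : ℝ, HasDerivAt (fun t => h (x, t)) (H (x, y)) y)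
    (hh : Integrable h) (hH : Integrable H) : ∫ z : ℝ × ℝ, H z = 0 := by
  have hvol : (volume : Measure (ℝ × ℝ)) = (volume : Measure ℝ).prod volume :=
    MeasureTheory.Measure.volume_eq_prod _ _
  rw [hvol] at hh hH ⊢
  rw [integral_prod _ hH]
  have hz : ∀ᵐ x : ℝ, (∫ y : ℝ, H (x, y)) = 0 := by
    filter_upwards [hh.prod_right_ae, hH.prod_right_ae] with x h1 h2
    exact integral_eq_zero_of_hasDerivAt_of_integrable (fun y => hd x y) h2 h1
  rw [integral_congr_ae hz, integral_zero]

lemma int_dom {F : ℝ × ℝ → ℝ} (hF : Continuous F)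
    (f : SchwartzMap (ℝ × ℝ) ℝ) (k : ℕ) (C : ℝ)
    (hb : ∀ z, |F z| ≤ C * (‖z‖ ^ k * |f z|)) : Integrable F := by
  refine ((f.integrable_pow_mul volume k).const_mul C).mono'
    hF.aestronglyMeasurable ?_
  filter_upwards with z
  simpa [Real.norm_eq_abs] using hb z

lemma psi_deriv {p : ℝ} (hp : 1 < p) (s : ℝ) :
    HasDerivAt (fun t : ℝ => |t| ^ (p+1)) ((p+1) * (|s| ^ (p-1) * s)) s := by
  have h1 : HasDerivAt (fun t : ℝ => t ^ 2) (2 * s) s := by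
    simpa using hasDerivAt_pow 2 s
  have h3 : HasDerivAt (fun t : ℝ => ((t:ℝ) ^ 2) ^ ((p+1)/2))
      ((2 * s) * ((p+1)/2) * (s ^ 2) ^ ((p+1)/2 - 1)) s :=
    h1.rpow_const (Or.inr (by linarith))
  have habs : ∀ t : ℝ, ((t : ℝ) ^ 2) ^ ((p+1)/2) = |t| ^ (p + 1) := by
    intro t
    rw [← sq_abs t, ← Real.rpow_natCast |t| 2, ← Real.rpow_mul (abs_nonneg t)]
    congr 1
    ring
  have habs' : ((s : ℝ) ^ 2) ^ ((p+1)/2 - 1) = |s| ^ (p - 1) := by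
    rw [← sq_abs s, ← Real.rpow_natCast |s| 2, ← Real.rpow_mul (abs_nonneg s)]
    congr 1
    ring
  have hfun : (fun t : ℝ => ((t : ℝ) ^ 2) ^ ((p+1)/2)) = fun t : ℝ => |t| ^ (p+1) :=
    funext habs
  rw [hfun] at h3
  convert h3 using 1
  rw [habs']
  ring

lemma int_mulS (f1 f2 : SchwartzMap (ℝ × ℝ) ℝ) :
    Integrable (fun z => f1 z * f2 z) := by
  refine int_dom (f1.continuous.mul f2.continuous) f2 0 (SchwartzMap.seminorm ℝ 0 0 f1) ?_
  intro z
  simp only [pow_zero, one_mul, abs_mul]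
  exact mul_le_mul_of_nonneg_right
    (by simpa [Real.norm_eq_abs] using SchwartzMap.norm_le_seminorm ℝ f1 z) (abs_nonneg _)

lemma int_w_mulS (w : ℝ × ℝ → ℝ) (hw : Continuous w) (Cw : ℝ)
    (hwb : ∀ z, |w z| ≤ Cw) (f1 f2 : SchwartzMap (ℝ × ℝ) ℝ) :
    Integrable (fun z => w z * (f1 z * f2 z)) := by
  refine int_dom (hw.mul (f1.continuous.mul f2.continuous)) f2 0
    (Cw * SchwartzMap.seminorm ℝ 0 0 f1) ?_
  intro z
  have h1 : |f1 z| ≤ SchwartzMap.seminorm ℝ 0 0 f1 := by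
    simpa [Real.norm_eq_abs] using SchwartzMap.norm_le_seminorm ℝ f1 z
  calc |w z * (f1 z * f2 z)| = |w z| * |f1 z| * |f2 z| := by
        rw [abs_mul, abs_mul, mul_assoc]
    _ ≤ Cw * SchwartzMap.seminorm ℝ 0 0 f1 * |f2 z| := by
        gcongr
        · exact (abs_nonneg _).trans (hwb z)
        · exact hwb z
    _ = Cw * SchwartzMap.seminorm ℝ 0 0 f1 * (‖z‖ ^ 0 * |f2 z|) := by
        simp
lemma int_fst_w_mulS (w : ℝ × ℝ → ℝ) (hw : Continuous w) (Cw : ℝ)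
    (hwb : ∀ z, |w z| ≤ Cw) (f1 f2 : SchwartzMap (ℝ × ℝ) ℝ) :
    Integrable (fun z : ℝ × ℝ => z.1 * (w z * (f1 z * f2 z))) := by
  refine int_dom (continuous_fst.mul (hw.mul (f1.continuous.mul f2.continuous))) f2 1
    (Cw * SchwartzMap.seminorm ℝ 0 0 f1) ?_
  intro z
  have h1 : |f1 z| ≤ SchwartzMap.seminorm ℝ 0 0 f1 := by
    simpa [Real.norm_eq_abs] using SchwartzMap.norm_le_seminorm ℝ f1 z
  have h2 : |z.1| ≤ ‖z‖ := by simpa [Real.norm_eq_abs] using norm_fst_le z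
  have hCw : 0 ≤ Cw := (abs_nonneg _).trans (hwb z)
  calc |z.1 * (w z * (f1 z * f2 z))| = |z.1| * |w z| * |f1 z| * |f2 z| := by
        rw [abs_mul, abs_mul, abs_mul]; ring
    _ ≤ ‖z‖ * Cw * SchwartzMap.seminorm ℝ 0 0 f1 * |f2 z| := by gcongr; exact hwb z
    _ = Cw * SchwartzMap.seminorm ℝ 0 0 f1 * (‖z‖ ^ 1 * |f2 z|) := by ring

lemma int_snd_w_mulS (w : ℝ × ℝ → ℝ) (hw : Continuous w) (Cw : ℝ)
    (hwb : ∀ z, |w z| ≤ Cw) (f1 f2 : SchwartzMap (ℝ × ℝ) ℝ) :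
    Integrable (fun z : ℝ × ℝ => z.2 * (w z * (f1 z * f2 z))) := by
  refine int_dom (continuous_snd.mul (hw.mul (f1.continuous.mul f2.continuous))) f2 1
    (Cw * SchwartzMap.seminorm ℝ 0 0 f1) ?_
  intro z
  have h1 : |f1 z| ≤ SchwartzMap.seminorm ℝ 0 0 f1 := by
    simpa [Real.norm_eq_abs] using SchwartzMap.norm_le_seminorm ℝ f1 z
  have h2 : |z.2| ≤ ‖z‖ := by simpa [Real.norm_eq_abs] using norm_snd_le z
  have hCw : 0 ≤ Cw := (abs_nonneg _).trans (hwb z)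
  calc |z.2 * (w z * (f1 z * f2 z))| = |z.2| * |w z| * |f1 z| * |f2 z| := by
        rw [abs_mul, abs_mul, abs_mul]; ring
    _ ≤ ‖z‖ * Cw * SchwartzMap.seminorm ℝ 0 0 f1 * |f2 z| := by gcongr; exact hwb z
    _ = Cw * SchwartzMap.seminorm ℝ 0 0 f1 * (‖z‖ ^ 1 * |f2 z|) := by ring

lemma int_fst_mulS (f1 f2 : SchwartzMap (ℝ × ℝ) ℝ) :
    Integrable (fun z : ℝ × ℝ => z.1 * (f1 z * f2 z)) := by
  have := int_fst_w_mulS (fun _ => (1:ℝ)) continuous_const 1 (by norm_num) f1 f2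
  simpa using this

lemma int_snd_mulS (f1 f2 : SchwartzMap (ℝ × ℝ) ℝ) :
    Integrable (fun z : ℝ × ℝ => z.2 * (f1 z * f2 z)) := by
  have := int_snd_w_mulS (fun _ => (1:ℝ)) continuous_const 1 (by norm_num) f1 f2
  simpa using this

lemma int_tr {f h : ℝ × ℝ → ℝ} (e : ∀ z, f z = h z) (hf : Integrable f) :
    Integrable h := (funext e) ▸ hf

lemma i_congr {f h : ℝ × ℝ → ℝ} (e : ∀ z, f z = h z) :
    (∫ z : ℝ × ℝ, f z) = ∫ z : ℝ × ℝ, h z := by rw [funext e]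

theorem pokhozhaev_first (p : ℝ) (hp : 1 < p) (Q : ℝ × ℝ → ℝ)
    (hQ : IsSchwartz Q)
    (heq : ∀ z, lap Q z - Q z + |Q z| ^ (p - 1) * Q z = 0) :
    (∫ z : ℝ × ℝ, ((pdx Q z) ^ 2 + (pdy Q z) ^ 2)) =
      (p - 1) / 2 * ∫ z : ℝ × ℝ, (Q z) ^ 2 := by
  obtain ⟨g, hg⟩ := hQ
  have hQg : Q = ⇑g := funext fun z => (hg z).symm
  subst hQg
  -- the weight function
  set w : ℝ × ℝ → ℝ := fun z => |g z| ^ (p - 1) with hwdef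
  have hwcont : Continuous w := by
    apply Continuous.rpow_const (continuous_abs.comp g.continuous)
    intro z; right; linarith
  set Cw : ℝ := (SchwartzMap.seminorm ℝ 0 0 g : ℝ) ^ (p - 1) with hCwdef
  have hgb : ∀ z, |g z| ≤ SchwartzMap.seminorm ℝ 0 0 g := fun z => by
    simpa [Real.norm_eq_abs] using SchwartzMap.norm_le_seminorm ℝ g z
  have hwb : ∀ z, |w z| ≤ Cw := by
    intro z
    rw [hwdef, abs_of_nonneg (Real.rpow_nonneg (abs_nonneg _) _)]
    exact Real.rpow_le_rpow (abs_nonneg _) (hgb z) (by linarith)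
  -- the elliptic equation in terms of Schwartz derivatives
  have hlap : ∀ z, Dx (Dx g) z + Dy (Dy g) z = g z - w z * g z := by
    intro z
    have h := heq z
    simp only [lap, pdx_eq, pdy_eq] at h
    simp only [hwdef]
    linarith
  -- pointwise: w z * (g z * g z) = |g z| ^ (p+1)
  have hpoint : ∀ z, w z * (g z * g z) = |g z| ^ (p + 1) := by
    intro z
    have h2 : |g z| ^ ((2:ℕ):ℝ) = g z * g z := by
      rw [Real.rpow_natCast, sq_abs, sq]
    rw [hwdef]
    rw [← h2, ← Real.rpow_add' (abs_nonneg _) (by push_cast; intro hcon; linarith)]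
    congr 1
    push_cast
    ring
  -- names for integrals
  have iaa := int_mulS (Dx g) (Dx g)
  have ibb := int_mulS (Dy g) (Dy g)
  have igg := int_mulS g g
  have iga := int_mulS g (Dx (Dx g))
  have igb := int_mulS g (Dy (Dy g))
  have iwgg := int_w_mulS w hwcont Cw hwb g g
  have iJ1 := int_fst_mulS g (Dx g)
  have iJ2 := int_snd_mulS g (Dy g)
  have iK1 := int_fst_w_mulS w hwcont Cw hwb g (Dx g)
  have iK2 := int_snd_w_mulS w hwcont Cw hwb g (Dy g)
  have iL1 := int_fst_mulS (Dx g) (Dx (Dx g))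
  have iL2 := int_snd_mulS (Dy g) (Dy (Dy g))
  have iM1 := int_fst_mulS (Dy g) (Dx (Dy g))
  have iM2 := int_snd_mulS (Dx g) (Dx (Dy g))
  have iX1 := int_fst_mulS (Dx g) (Dy (Dy g))
  have iX2 := int_snd_mulS (Dy g) (Dx (Dx g))
  -- Identity (A): ∫ (Dx g)² + ∫ g (Dxx g) = 0
  have eqA : (∫ z : ℝ × ℝ, Dx g z * Dx g z) + (∫ z : ℝ × ℝ, g z * Dx (Dx g) z) = 0 := by
    have h0 : ∫ z : ℝ × ℝ, (Dx g z * Dx g z + g z * Dx (Dx g) z) = 0 := by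
      refine ibpX (fun z => g z * Dx g z)
        (fun z => Dx g z * Dx g z + g z * Dx (Dx g) z) ?_ (int_mulS g (Dx g))
        (iaa.add iga)
      intro x y
      exact (sliceX g x y).mul (sliceX (Dx g) x y)
    rw [integral_add iaa iga] at h0
    exact h0
  have eqB : (∫ z : ℝ × ℝ, Dy g z * Dy g z) + (∫ z : ℝ × ℝ, g z * Dy (Dy g) z) = 0 := by
    have h0 : ∫ z : ℝ × ℝ, (Dy g z * Dy g z + g z * Dy (Dy g) z) = 0 := by
      refine ibpY (fun z => g z * Dy g z)
        (fun z => Dy g z * Dy g z + g z * Dy (Dy g) z) ?_ (int_mulS g (Dy g))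
        (ibb.add igb)
      intro x y
      exact (sliceY g x y).mul (sliceY (Dy g) x y)
    rw [integral_add ibb igb] at h0
    exact h0
  have eqC : (∫ z : ℝ × ℝ, g z * Dx (Dx g) z) + (∫ z : ℝ × ℝ, g z * Dy (Dy g) z)
      = (∫ z : ℝ × ℝ, g z * g z) - (∫ z : ℝ × ℝ, w z * (g z * g z)) := by
    rw [← integral_add iga igb, ← integral_sub igg iwgg]
    apply i_congr
    intro z
    linear_combination (g z) * hlap z
  -- Identity (D): ∫ g² + 2 ∫ x g gₓ = 0
  have eqD : (∫ z : ℝ × ℝ, g z * g z) + 2 * (∫ z : ℝ × ℝ, z.1 * (g z * Dx g z)) = 0 := by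
    have h0 : ∫ z : ℝ × ℝ, ((1:ℝ) * (g z * g z) + z.1 * (Dx g z * g z + g z * Dx g z)) = 0 := by
      refine ibpX (fun z : ℝ × ℝ => z.1 * (g z * g z)) _ ?_ (int_fst_mulS g g) ?_
      · intro x y
        exact (hasDerivAt_id x).mul ((sliceX g x y).mul (sliceX g x y))
      · exact int_tr (f := fun z : ℝ × ℝ => g z * g z + 2 * (z.1 * (g z * Dx g z)))
          (fun z => by ring) (igg.add ((int_fst_mulS g (Dx g)).const_mul 2))
    have h1 : ∫ z : ℝ × ℝ, (g z * g z + 2 * (z.1 * (g z * Dx g z))) = 0 := by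
      rw [i_congr (h := fun z : ℝ × ℝ =>
        (1:ℝ) * (g z * g z) + z.1 * (Dx g z * g z + g z * Dx g z)) (fun z => by ring)]
      exact h0
    rwa [integral_add igg (iJ1.const_mul 2), integral_const_mul] at h1
  have eqD' : (∫ z : ℝ × ℝ, g z * g z) + 2 * (∫ z : ℝ × ℝ, z.2 * (g z * Dy g z)) = 0 := by
    have h0 : ∫ z : ℝ × ℝ, ((1:ℝ) * (g z * g z) + z.2 * (Dy g z * g z + g z * Dy g z)) = 0 := by
      refine ibpY (fun z : ℝ × ℝ => z.2 * (g z * g z)) _ ?_ (int_snd_mulS g g) ?_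
      · intro x y
        exact (hasDerivAt_id y).mul ((sliceY g x y).mul (sliceY g x y))
      · exact int_tr (f := fun z : ℝ × ℝ => g z * g z + 2 * (z.2 * (g z * Dy g z)))
          (fun z => by ring) (igg.add ((int_snd_mulS g (Dy g)).const_mul 2))
    have h1 : ∫ z : ℝ × ℝ, (g z * g z + 2 * (z.2 * (g z * Dy g z))) = 0 := by
      rw [i_congr (h := fun z : ℝ × ℝ =>
        (1:ℝ) * (g z * g z) + z.2 * (Dy g z * g z + g z * Dy g z)) (fun z => by ring)]
      exact h0
    rwa [integral_add igg (iJ2.const_mul 2), integral_const_mul] at h1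
  -- Identity (E): ∫ |g|^{p+1} + (p+1) ∫ x |g|^{p-1} g gₓ = 0
  have eqE : (∫ z : ℝ × ℝ, w z * (g z * g z))
      + (p+1) * (∫ z : ℝ × ℝ, z.1 * (w z * (g z * Dx g z))) = 0 := by
    have h0 : ∫ z : ℝ × ℝ, ((1:ℝ) * |g z| ^ (p+1)
        + z.1 * ((p+1) * (|g z| ^ (p-1) * g z) * Dx g z)) = 0 := by
      refine ibpX (fun z : ℝ × ℝ => z.1 * |g z| ^ (p+1)) _ ?_ ?_ ?_
      · intro x y
        exact (hasDerivAt_id x).mul (by have h := (psi_deriv hp (g (x,y))).comp x (sliceX g x y); exact h)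
      · exact int_tr (f := fun z : ℝ × ℝ => z.1 * (w z * (g z * g z)))
          (fun z => by beta_reduce; rw [hpoint z]) (int_fst_w_mulS w hwcont Cw hwb g g)
      · refine int_tr (f := fun z : ℝ × ℝ => w z * (g z * g z)
          + (p+1) * (z.1 * (w z * (g z * Dx g z)))) ?_
          (iwgg.add (iK1.const_mul (p+1)))
        intro z
        beta_reduce
        rw [hpoint z, show w z = |g z| ^ (p-1) from by rw [hwdef]]
        ring
    have h1 : ∫ z : ℝ × ℝ, (w z * (g z * g z) + (p+1) * (z.1 * (w z * (g z * Dx g z)))) = 0 := by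
      rw [i_congr (h := fun z : ℝ × ℝ => (1:ℝ) * |g z| ^ (p+1)
        + z.1 * ((p+1) * (|g z| ^ (p-1) * g z) * Dx g z)) (fun z => by
          beta_reduce; rw [hpoint z, show w z = |g z| ^ (p-1) from by rw [hwdef]]; ring)]
      exact h0
    rwa [integral_add iwgg (iK1.const_mul (p+1)), integral_const_mul] at h1
  have eqE' : (∫ z : ℝ × ℝ, w z * (g z * g z))
      + (p+1) * (∫ z : ℝ × ℝ, z.2 * (w z * (g z * Dy g z))) = 0 := by
    have h0 : ∫ z : ℝ × ℝ, ((1:ℝ) * |g z| ^ (p+1)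
        + z.2 * ((p+1) * (|g z| ^ (p-1) * g z) * Dy g z)) = 0 := by
      refine ibpY (fun z : ℝ × ℝ => z.2 * |g z| ^ (p+1)) _ ?_ ?_ ?_
      · intro x y
        exact (hasDerivAt_id y).mul (by have h := (psi_deriv hp (g (x,y))).comp y (sliceY g x y); exact h)
      · exact int_tr (f := fun z : ℝ × ℝ => z.2 * (w z * (g z * g z)))
          (fun z => by beta_reduce; rw [hpoint z]) (int_snd_w_mulS w hwcont Cw hwb g g)
      · refine int_tr (f := fun z : ℝ × ℝ => w z * (g z * g z)
          + (p+1) * (z.2 * (w z * (g z * Dy g z)))) ?_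
          (iwgg.add (iK2.const_mul (p+1)))
        intro z
        beta_reduce
        rw [hpoint z, show w z = |g z| ^ (p-1) from by rw [hwdef]]
        ring
    have h1 : ∫ z : ℝ × ℝ, (w z * (g z * g z) + (p+1) * (z.2 * (w z * (g z * Dy g z)))) = 0 := by
      rw [i_congr (h := fun z : ℝ × ℝ => (1:ℝ) * |g z| ^ (p+1)
        + z.2 * ((p+1) * (|g z| ^ (p-1) * g z) * Dy g z)) (fun z => by
          beta_reduce; rw [hpoint z, show w z = |g z| ^ (p-1) from by rw [hwdef]]; ring)]
      exact h0
    rwa [integral_add iwgg (iK2.const_mul (p+1)), integral_const_mul] at h1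
  -- (F) identities
  have eqF1 : (∫ z : ℝ × ℝ, Dx g z * Dx g z)
      + 2 * (∫ z : ℝ × ℝ, z.1 * (Dx g z * Dx (Dx g) z)) = 0 := by
    have h0 : ∫ z : ℝ × ℝ, ((1:ℝ) * (Dx g z * Dx g z)
        + z.1 * (Dx (Dx g) z * Dx g z + Dx g z * Dx (Dx g) z)) = 0 := by
      refine ibpX (fun z : ℝ × ℝ => z.1 * (Dx g z * Dx g z)) _ ?_ (int_fst_mulS (Dx g) (Dx g)) ?_
      · intro x y
        exact (hasDerivAt_id x).mul ((sliceX (Dx g) x y).mul (sliceX (Dx g) x y))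
      · exact int_tr (f := fun z : ℝ × ℝ => Dx g z * Dx g z + 2 * (z.1 * (Dx g z * Dx (Dx g) z)))
          (fun z => by ring) (iaa.add (iL1.const_mul 2))
    have h1 : ∫ z : ℝ × ℝ, (Dx g z * Dx g z + 2 * (z.1 * (Dx g z * Dx (Dx g) z))) = 0 := by
      rw [i_congr (h := fun z : ℝ × ℝ => (1:ℝ) * (Dx g z * Dx g z)
        + z.1 * (Dx (Dx g) z * Dx g z + Dx g z * Dx (Dx g) z)) (fun z => by ring)]
      exact h0
    rwa [integral_add iaa (iL1.const_mul 2), integral_const_mul] at h1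
  have eqF2 : (∫ z : ℝ × ℝ, Dy g z * Dy g z)
      + 2 * (∫ z : ℝ × ℝ, z.2 * (Dy g z * Dy (Dy g) z)) = 0 := by
    have h0 : ∫ z : ℝ × ℝ, ((1:ℝ) * (Dy g z * Dy g z)
        + z.2 * (Dy (Dy g) z * Dy g z + Dy g z * Dy (Dy g) z)) = 0 := by
      refine ibpY (fun z : ℝ × ℝ => z.2 * (Dy g z * Dy g z)) _ ?_ (int_snd_mulS (Dy g) (Dy g)) ?_
      · intro x y
        exact (hasDerivAt_id y).mul ((sliceY (Dy g) x y).mul (sliceY (Dy g) x y))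
      · exact int_tr (f := fun z : ℝ × ℝ => Dy g z * Dy g z + 2 * (z.2 * (Dy g z * Dy (Dy g) z)))
          (fun z => by ring) (ibb.add (iL2.const_mul 2))
    have h1 : ∫ z : ℝ × ℝ, (Dy g z * Dy g z + 2 * (z.2 * (Dy g z * Dy (Dy g) z))) = 0 := by
      rw [i_congr (h := fun z : ℝ × ℝ => (1:ℝ) * (Dy g z * Dy g z)
        + z.2 * (Dy (Dy g) z * Dy g z + Dy g z * Dy (Dy g) z)) (fun z => by ring)]
      exact h0
    rwa [integral_add ibb (iL2.const_mul 2), integral_const_mul] at h1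
  have eqF3 : (∫ z : ℝ × ℝ, Dy g z * Dy g z)
      + 2 * (∫ z : ℝ × ℝ, z.1 * (Dy g z * Dx (Dy g) z)) = 0 := by
    have h0 : ∫ z : ℝ × ℝ, ((1:ℝ) * (Dy g z * Dy g z)
        + z.1 * (Dx (Dy g) z * Dy g z + Dy g z * Dx (Dy g) z)) = 0 := by
      refine ibpX (fun z : ℝ × ℝ => z.1 * (Dy g z * Dy g z)) _ ?_ (int_fst_mulS (Dy g) (Dy g)) ?_
      · intro x y
        exact (hasDerivAt_id x).mul ((sliceX (Dy g) x y).mul (sliceX (Dy g) x y))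
      · exact int_tr (f := fun z : ℝ × ℝ => Dy g z * Dy g z + 2 * (z.1 * (Dy g z * Dx (Dy g) z)))
          (fun z => by ring) (ibb.add (iM1.const_mul 2))
    have h1 : ∫ z : ℝ × ℝ, (Dy g z * Dy g z + 2 * (z.1 * (Dy g z * Dx (Dy g) z))) = 0 := by
      rw [i_congr (h := fun z : ℝ × ℝ => (1:ℝ) * (Dy g z * Dy g z)
        + z.1 * (Dx (Dy g) z * Dy g z + Dy g z * Dx (Dy g) z)) (fun z => by ring)]
      exact h0
    rwa [integral_add ibb (iM1.const_mul 2), integral_const_mul] at h1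
  have eqF4 : (∫ z : ℝ × ℝ, Dx g z * Dx g z)
      + 2 * (∫ z : ℝ × ℝ, z.2 * (Dx g z * Dx (Dy g) z)) = 0 := by
    have h0 : ∫ z : ℝ × ℝ, ((1:ℝ) * (Dx g z * Dx g z)
        + z.2 * (Dy (Dx g) z * Dx g z + Dx g z * Dy (Dx g) z)) = 0 := by
      refine ibpY (fun z : ℝ × ℝ => z.2 * (Dx g z * Dx g z)) _ ?_ (int_snd_mulS (Dx g) (Dx g)) ?_
      · intro x y
        exact (hasDerivAt_id y).mul ((sliceY (Dx g) x y).mul (sliceY (Dx g) x y))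
      · exact int_tr (f := fun z : ℝ × ℝ => Dx g z * Dx g z + 2 * (z.2 * (Dx g z * Dx (Dy g) z)))
          (fun z => by beta_reduce; rw [← mixed g z]; ring) (iaa.add (iM2.const_mul 2))
    have h1 : ∫ z : ℝ × ℝ, (Dx g z * Dx g z + 2 * (z.2 * (Dx g z * Dx (Dy g) z))) = 0 := by
      rw [i_congr (h := fun z : ℝ × ℝ => (1:ℝ) * (Dx g z * Dx g z)
        + z.2 * (Dy (Dx g) z * Dx g z + Dx g z * Dy (Dx g) z)) (fun z => by
          beta_reduce; rw [← mixed g z]; ring)]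
      exact h0
    rwa [integral_add iaa (iM2.const_mul 2), integral_const_mul] at h1
  -- (G) identities
  have eqG1 : (∫ z : ℝ × ℝ, z.1 * (Dy g z * Dx (Dy g) z))
      + (∫ z : ℝ × ℝ, z.1 * (Dx g z * Dy (Dy g) z)) = 0 := by
    have h0 : ∫ z : ℝ × ℝ, (z.1 * (Dy (Dx g) z * Dy g z + Dx g z * Dy (Dy g) z)) = 0 := by
      refine ibpY (fun z : ℝ × ℝ => z.1 * (Dx g z * Dy g z)) _ ?_
        (int_fst_mulS (Dx g) (Dy g)) ?_
      · intro x y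
        exact ((sliceY (Dx g) x y).mul (sliceY (Dy g) x y)).const_mul x
      · exact int_tr (f := fun z : ℝ × ℝ => z.1 * (Dy g z * Dx (Dy g) z)
          + z.1 * (Dx g z * Dy (Dy g) z))
          (fun z => by beta_reduce; rw [← mixed g z]; ring) (iM1.add iX1)
    have h1 : ∫ z : ℝ × ℝ, (z.1 * (Dy g z * Dx (Dy g) z) + z.1 * (Dx g z * Dy (Dy g) z)) = 0 := by
      rw [i_congr (h := fun z : ℝ × ℝ =>
        z.1 * (Dy (Dx g) z * Dy g z + Dx g z * Dy (Dy g) z)) (fun z => by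
          beta_reduce; rw [← mixed g z]; ring)]
      exact h0
    rwa [integral_add iM1 iX1] at h1
  have eqG2 : (∫ z : ℝ × ℝ, z.2 * (Dy g z * Dx (Dx g) z))
      + (∫ z : ℝ × ℝ, z.2 * (Dx g z * Dx (Dy g) z)) = 0 := by
    have h0 : ∫ z : ℝ × ℝ, (z.2 * (Dx (Dx g) z * Dy g z + Dx g z * Dx (Dy g) z)) = 0 := by
      refine ibpX (fun z : ℝ × ℝ => z.2 * (Dx g z * Dy g z)) _ ?_
        (int_snd_mulS (Dx g) (Dy g)) ?_
      · intro x y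
        exact ((sliceX (Dx g) x y).mul (sliceX (Dy g) x y)).const_mul y
      · exact int_tr (f := fun z : ℝ × ℝ => z.2 * (Dy g z * Dx (Dx g) z)
          + z.2 * (Dx g z * Dx (Dy g) z))
          (fun z => by ring) (iX2.add iM2)
    have h1 : ∫ z : ℝ × ℝ, (z.2 * (Dy g z * Dx (Dx g) z) + z.2 * (Dx g z * Dx (Dy g) z)) = 0 := by
      rw [i_congr (h := fun z : ℝ × ℝ =>
        z.2 * (Dx (Dx g) z * Dy g z + Dx g z * Dx (Dy g) z)) (fun z => by ring)]
      exact h0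
    rwa [integral_add iX2 iM2] at h1
  -- (P) identities from the equation
  have eqP1 : (∫ z : ℝ × ℝ, z.1 * (Dx g z * Dx (Dx g) z))
      + (∫ z : ℝ × ℝ, z.1 * (Dx g z * Dy (Dy g) z))
      = (∫ z : ℝ × ℝ, z.1 * (g z * Dx g z)) - (∫ z : ℝ × ℝ, z.1 * (w z * (g z * Dx g z))) := by
    rw [← integral_add iL1 iX1, ← integral_sub iJ1 iK1]
    apply i_congr
    intro z
    linear_combination (z.1 * Dx g z) * hlap z
  have eqP2 : (∫ z : ℝ × ℝ, z.2 * (Dy g z * Dx (Dx g) z))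
      + (∫ z : ℝ × ℝ, z.2 * (Dy g z * Dy (Dy g) z))
      = (∫ z : ℝ × ℝ, z.2 * (g z * Dy g z)) - (∫ z : ℝ × ℝ, z.2 * (w z * (g z * Dy g z))) := by
    rw [← integral_add iX2 iL2, ← integral_sub iJ2 iK2]
    apply i_congr
    intro z
    linear_combination (z.2 * Dy g z) * hlap z
  -- final assembly
  have hgoal1 : (∫ z : ℝ × ℝ, ((pdx (⇑g) z) ^ 2 + (pdy (⇑g) z) ^ 2))
      = (∫ z : ℝ × ℝ, Dx g z * Dx g z) + (∫ z : ℝ × ℝ, Dy g z * Dy g z) := by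
    rw [← integral_add iaa ibb]
    apply i_congr
    intro z
    simp only [pdx_eq, pdy_eq]
    ring
  have hgoal2 : (∫ z : ℝ × ℝ, (g z) ^ 2) = ∫ z : ℝ × ℝ, g z * g z :=
    i_congr (fun z => by ring)
  rw [hgoal1, hgoal2]
  have hK : (∫ z : ℝ × ℝ, z.1 * (w z * (g z * Dx g z)))
      + (∫ z : ℝ × ℝ, z.2 * (w z * (g z * Dy g z))) = -(∫ z : ℝ × ℝ, g z * g z) := by
    linarith [eqP1, eqP2, eqF1, eqF2, eqF3, eqF4, eqG1, eqG2, eqD, eqD']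
  have hIP : 2 * (∫ z : ℝ × ℝ, w z * (g z * g z)) = (p+1) * (∫ z : ℝ × ℝ, g z * g z) := by
    linear_combination eqE + eqE' - (p+1) * hK
  have hsum : (∫ z : ℝ × ℝ, Dx g z * Dx g z) + (∫ z : ℝ × ℝ, Dy g z * Dy g z)
      = (∫ z : ℝ × ℝ, w z * (g z * g z)) - (∫ z : ℝ × ℝ, g z * g z) := by
    linarith [eqA, eqB, eqC]
  linear_combination hsum + (1/2 : ℝ) * hIP
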